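/- Let (X, μ) be a measure space, p ∈ (1,∞), and let f₁,…,f_{n₀} be measurable functions with pairwise disjoint supports A₁,…,A_{n₀} such that for each n ≥ 2 and t > 0 either d_{f_n}(t) ≥ μ(A₁ ∪ ⋯ ∪ A_{n−1}) or d_{f_n}(t) = 0. Then there is a constant C₁ = C₁(p), independent of X, n₀, and the functions, such that (1/C₁)·max_{1≤n≤n₀} ‖f_n‖_{p,∞} ≤ ‖∑_{n=1}^{n₀} f_n‖_{p,∞} ≤ C₁·max_{1≤n≤n₀} ‖f_n‖_{p,∞}. -/

import Mathlib

open MeasureTheory ENNReal NNReal Set Filter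

/-- The distribution function `d_f(t) = μ {x : t ≤ |f x|}`. -/
noncomputable def distFun {X : Type*} [MeasurableSpace X] (μ : Measure X) (f : X → ℝ) (t : ℝ) :
    ℝ≥0∞ :=
  μ {x | t ≤ |f x|}

/-- The Lorentz quasi-norm `‖f‖_{p,q}` (with `q = ⊤` giving the weak-type norm). -/
noncomputable def lorentzNorm {X : Type*} [MeasurableSpace X] (μ : Measure X) (p : ℝ)
    (q : ℝ≥0∞) (f : X → ℝ) : ℝ≥0∞ :=
  if q = ⊤ then ⨆ t ∈ Ioi (0 : ℝ), ENNReal.ofReal t * distFun μ f t ^ (1 / p)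
  else ENNReal.ofReal p ^ (1 / q.toReal) *
    (∫⁻ t in Ioi (0 : ℝ),
      (ENNReal.ofReal t * distFun μ f t ^ (1 / p)) ^ q.toReal / ENNReal.ofReal t) ^ (1 / q.toReal)

/-- Lemma 2.4 (case `q = ∞`): for functions with pairwise disjoint supports whose distribution
functions dominate the total measure of the preceding supports, the weak-`L^p` norm of the sum
is comparable to the maximum of the weak-`L^p` norms, with a constant `C₁(p)` independent of the
space, of `n₀`, and of the functions. -/
theorem lorentz_disjoint_sum_weak (p : ℝ) (hp : 1 < p) :
    ∃ C : ℝ≥0, 0 < C ∧ ∀ (X : Type) (_ : MeasurableSpace X) (μ : Measure X) (n₀ : ℕ)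
      (f : Fin n₀ → X → ℝ), (∀ i, Measurable (f i)) →
      Pairwise (fun i j => Disjoint (Function.support (f i)) (Function.support (f j))) →
      (∀ i : Fin n₀, ∀ t : ℝ, 0 < t →
        μ (⋃ j : Fin n₀, ⋃ (_ : (j : ℕ) < (i : ℕ)), Function.support (f j)) ≤ distFun μ (f i) t ∨
        distFun μ (f i) t = 0) →
      (C : ℝ≥0∞)⁻¹ * (⨆ i : Fin n₀, lorentzNorm μ p ⊤ (f i)) ≤
          lorentzNorm μ p ⊤ (fun x => ∑ i : Fin n₀, f i x) ∧
        lorentzNorm μ p ⊤ (fun x => ∑ i : Fin n₀, f i x) ≤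
          C * ⨆ i : Fin n₀, lorentzNorm μ p ⊤ (f i) := by
  have hp0 : (0:ℝ) < 1 / p := by positivity
  refine ⟨2, by norm_num, fun X mX μ n₀ f hmeas hdisj hdom => ?_⟩
  -- sum equals individual value on supports
  have hsum : ∀ (i : Fin n₀) (x : X), f i x ≠ 0 → ∑ j, f j x = f i x := by
    intro i x hix
    refine Finset.sum_eq_single_of_mem i (Finset.mem_univ i) (fun j _ hji => ?_)
    by_contra hjx
    exact (hdisj hji).le_bot ⟨hjx, hix⟩
  -- key set identity
  have hset : ∀ t : ℝ, 0 < t →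
      {x | t ≤ |∑ i, f i x|} = ⋃ i, {x | t ≤ |f i x|} := by
    intro t ht
    ext x
    simp only [Set.mem_setOf_eq, Set.mem_iUnion]
    constructor
    · intro hx
      have hne : ∑ i, f i x ≠ 0 := by
        intro h0; rw [h0] at hx; simp at hx; linarith
      obtain ⟨i, _, hi⟩ := Finset.exists_ne_zero_of_sum_ne_zero hne
      exact ⟨i, by rwa [hsum i x hi] at hx⟩
    · rintro ⟨i, hi⟩
      have hne : f i x ≠ 0 := by
        intro h0; rw [h0] at hi; simp at hi; linarith
      rwa [hsum i x hne]
  have hLN : ∀ g : X → ℝ, lorentzNorm μ p ⊤ g =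
      ⨆ t ∈ Ioi (0 : ℝ), ENNReal.ofReal t * distFun μ g t ^ (1 / p) := by
    intro g; simp [lorentzNorm]
  constructor
  · -- lower bound
    calc ((2:ℝ≥0) : ℝ≥0∞)⁻¹ * (⨆ i : Fin n₀, lorentzNorm μ p ⊤ (f i))
        ≤ 1 * (⨆ i : Fin n₀, lorentzNorm μ p ⊤ (f i)) := by
          gcongr
          exact ENNReal.inv_le_one.mpr (by norm_num)
      _ = ⨆ i : Fin n₀, lorentzNorm μ p ⊤ (f i) := one_mul _
      _ ≤ lorentzNorm μ p ⊤ (fun x => ∑ i : Fin n₀, f i x) := by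
          refine iSup_le fun i => ?_
          rw [hLN, hLN]
          refine iSup₂_le fun t ht => ?_
          refine le_trans ?_ (le_iSup₂ (f := fun (t : ℝ) (_ : t ∈ Ioi (0:ℝ)) =>
            ENNReal.ofReal t * distFun μ (fun x => ∑ i, f i x) t ^ (1 / p)) t ht)
          gcongr
          exact measure_mono (by rw [hset t ht]; exact Set.subset_iUnion (fun j => {x | t ≤ |f j x|}) i)
  · -- upper bound
    rw [hLN]
    refine iSup₂_le fun t ht => ?_
    have hdsum : distFun μ (fun x => ∑ i, f i x) t ≤ ∑ i, distFun μ (f i) t := by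
      unfold distFun
      rw [hset t ht]
      exact measure_iUnion_fintype_le μ _
    by_cases hall : ∀ i, distFun μ (f i) t = 0
    · have : distFun μ (fun x => ∑ i, f i x) t = 0 := by
        refine le_antisymm (le_trans hdsum ?_) zero_le
        simp [hall]
      rw [this, ENNReal.zero_rpow_of_pos hp0, mul_zero]
      exact zero_le
    · push_neg at hall
      obtain ⟨i₀, hi₀⟩ := hall
      set s : Finset (Fin n₀) := Finset.univ.filter (fun i => distFun μ (f i) t ≠ 0) with hs
      have hsne : s.Nonempty := ⟨i₀, by simp [hs, hi₀]⟩
      set m := s.max' hsne with hm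
      have hmem : m ∈ s := s.max'_mem hsne
      have hmne : distFun μ (f m) t ≠ 0 := by
        have := hmem; simp [hs] at this; exact this
      -- sum over others bounded by measure of earlier supports
      have ht' : (0:ℝ) < t := ht
      have hsub : ∀ i : Fin n₀, {x | t ≤ |f i x|} ⊆ Function.support (f i) := by
        intro i x hx
        simp only [Set.mem_setOf_eq] at hx
        simp only [Function.mem_support]
        intro h0
        rw [h0] at hx; simp at hx; linarith
      have hrest : ∑ i ∈ s.erase m, distFun μ (f i) t ≤
          μ (⋃ j : Fin n₀, ⋃ (_ : (j : ℕ) < (m : ℕ)), Function.support (f j)) := by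
        have hUeq : (⋃ j : Fin n₀, ⋃ (_ : (j : ℕ) < (m : ℕ)), Function.support (f j)) =
            ⋃ j ∈ Finset.univ.filter (fun j : Fin n₀ => (j:ℕ) < (m:ℕ)),
              Function.support (f j) := by
          ext x; simp
        rw [hUeq, measure_biUnion_finset ?_ (fun j _ => measurableSet_support (hmeas j))]
        · refine le_trans ?_ (Finset.sum_le_sum (fun j _ => measure_mono (hsub j)))
          refine Finset.sum_le_sum_of_subset ?_
          intro j hj
          simp only [Finset.mem_erase, hs, Finset.mem_filter, Finset.mem_univ, true_and] at hj ⊢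
          have hle : j ≤ m := s.le_max' j (by simp [hs, hj.2])
          exact lt_of_le_of_ne (Fin.val_le_of_le hle) (fun h => hj.1 (Fin.ext h))
        · intro a ha b hb hab
          exact hdisj hab
      have hdomm : μ (⋃ j : Fin n₀, ⋃ (_ : (j : ℕ) < (m : ℕ)), Function.support (f j)) ≤
          distFun μ (f m) t := (hdom m t ht).resolve_right hmne
      have hsum2 : ∑ i, distFun μ (f i) t ≤ 2 * distFun μ (f m) t := by
        have hz : ∀ i ∈ Finset.univ \ s, distFun μ (f i) t = 0 := by
          intro i hi; simp [hs] at hi; exact hi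
        have : ∑ i, distFun μ (f i) t = ∑ i ∈ s, distFun μ (f i) t := by
          refine (Finset.sum_subset (Finset.subset_univ s) ?_).symm
          intro i _ his; simp [hs] at his; exact his
        rw [this, ← Finset.add_sum_erase s _ hmem, two_mul]
        gcongr
        exact le_trans hrest hdomm
      have h2p : (2:ℝ≥0∞) ^ (1/p) ≤ 2 := by
        have h := ENNReal.rpow_le_rpow_of_exponent_le (x := 2) (y := 1/p) (z := 1)
          one_le_two (by rw [div_le_one (by linarith)]; linarith)
        simpa using h
      have hnorm : ENNReal.ofReal t * distFun μ (f m) t ^ (1/p) ≤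
          ⨆ i, lorentzNorm μ p ⊤ (f i) := by
        refine le_trans ?_ (le_iSup (fun i => lorentzNorm μ p ⊤ (f i)) m)
        rw [hLN]
        exact le_iSup₂ (f := fun (t : ℝ) (_ : t ∈ Ioi (0:ℝ)) =>
          ENNReal.ofReal t * distFun μ (f m) t ^ (1 / p)) t ht
      have h2c : ((2:ℝ≥0) : ℝ≥0∞) = 2 := by norm_num
      rw [h2c]
      calc ENNReal.ofReal t * distFun μ (fun x => ∑ i, f i x) t ^ (1 / p)
          ≤ ENNReal.ofReal t * (2 * distFun μ (f m) t) ^ (1 / p) := by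
            gcongr
            exact le_trans hdsum hsum2
        _ = 2 ^ (1/p) * (ENNReal.ofReal t * distFun μ (f m) t ^ (1 / p)) := by
            rw [ENNReal.mul_rpow_of_nonneg _ _ hp0.le]; ring
        _ ≤ 2 * ⨆ i, lorentzNorm μ p ⊤ (f i) := mul_le_mul' h2p hnorm
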